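/- Every equivalence-equipped argumentation framework has at least one simple defence-complete extension, at least one simple defence-preferred extension, and at least one simple defence-grounded extension. -/

import Mathlib

namespace EEAF

variable {A : Type*}

/-- Equivalence closure of a set of arguments. -/
def cl (equiv : A → A → Prop) (S : Set A) : Set A := {u | ∃ v ∈ S, equiv u v}

/-- `S` is simple-conflict-free: no attacks among members of `S`. -/
def SimpleCF (att : A → A → Prop) (S : Set A) : Prop := ∀ u ∈ S, ∀ v ∈ S, ¬ att u v

/-- `S` is wide-conflict-free: its equivalence closure is simple-conflict-free. -/
def WideCF (att equiv : A → A → Prop) (S : Set A) : Prop := SimpleCF att (cl equiv S)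

/-- `S` simple-defends `u`. -/
def SimpleDef (att : A → A → Prop) (S : Set A) (u : A) : Prop :=
  ∀ v, att v u → ∃ w ∈ S, att w v

/-- `S` wide-defends `u`: it simple-defends every member of `cl {u}`. -/
def WideDef (att equiv : A → A → Prop) (S : Set A) (u : A) : Prop :=
  ∀ x ∈ cl equiv ({u} : Set A), SimpleDef att S x

/-- `S` is simple-admissible. -/
def SimpleAdm (att : A → A → Prop) (S : Set A) : Prop :=
  SimpleCF att S ∧ ∀ u ∈ S, SimpleDef att S u

/-- `S` is wide-admissible. -/
def WideAdm (att equiv : A → A → Prop) (S : Set A) : Prop :=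
  WideCF att equiv S ∧ ∀ u ∈ S, WideDef att equiv S u

/-- `S` is closed under equivalence. -/
def ClosedEquiv (equiv : A → A → Prop) (S : Set A) : Prop := S = cl equiv S

/-- `S` is closed under simple defence. -/
def ClosedSimpleDef (att : A → A → Prop) (S : Set A) : Prop :=
  ∀ u, SimpleDef att S u → u ∈ S

/-- Simple defence-complete extension. -/
def SimpleDefComplete (att : A → A → Prop) (S : Set A) : Prop :=
  SimpleAdm att S ∧ ClosedSimpleDef att S

/-- The characteristic (defence) operator as a monotone map. -/
def defOp (att : A → A → Prop) : Set A →o Set A :=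
  ⟨fun S => {u | SimpleDef att S u}, by
    intro S T hST u hu v hv
    obtain ⟨w, hw, hwv⟩ := hu v hv
    exact ⟨w, hST hw, hwv⟩⟩

theorem exists_simpleDefComplete (att : A → A → Prop) :
    ∃ S : Set A, SimpleDefComplete att S := by
  refine ⟨OrderHom.lfp (defOp att), ?_⟩
  set G := OrderHom.lfp (defOp att) with hG
  have hfix : defOp att G = G := OrderHom.map_lfp (defOp att)
  have hmem : ∀ u, u ∈ G ↔ SimpleDef att G u := by
    intro u
    constructor
    · intro hu
      rw [← hfix] at hu
      exact hu
    · intro hu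
      rw [← hfix]
      exact hu
  -- no conflicts between lfp-approximants and G
  have hcf : ∀ u ∈ G, ∀ v ∈ G, ¬ att u v ∧ ¬ att v u := by
    have key : (fun S : Set A => ∀ u ∈ S, ∀ v ∈ G, ¬ att u v ∧ ¬ att v u) G := by
      rw [hG]
      apply OrderHom.lfp_induction (defOp att) (p := fun S => ∀ u ∈ S, ∀ v ∈ G, ¬ att u v ∧ ¬ att v u)
      · intro S hS hSle u hu v hv
        have hdu : SimpleDef att S u := hu
        have hdv : SimpleDef att G v := (hmem v).1 hv
        constructor
        · intro huv
          obtain ⟨w, hwG, hwu⟩ := hdv u huv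
          obtain ⟨w', hw'S, hw'w⟩ := hdu w hwu
          exact ((hS w' hw'S w hwG).1) hw'w
        · intro hvu
          obtain ⟨w, hwS, hwv⟩ := hdu v hvu
          exact ((hS w hwS v hv).1) hwv
      · intro s hs u hu v hv
        obtain ⟨S, hSs, huS⟩ := hu
        exact hs S hSs u huS v hv
    exact key
  refine ⟨⟨fun u hu v hv => (hcf u hu v hv).1, fun u hu => (hmem u).1 hu⟩,
    fun u hu => (hmem u).2 hu⟩

/-- Existence of simple defence-complete, -preferred and -grounded extensions. -/
theorem exists_simpleDef_complete_preferred_grounded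
    (A : Type*) [Fintype A] (att equiv : A → A → Prop) (heq : Equivalence equiv) :
    (∃ S : Set A, SimpleDefComplete att S) ∧
    (∃ S : Set A, SimpleDefComplete att S ∧
      ∀ T, SimpleDefComplete att T → S ⊆ T → T = S) ∧
    (∃ S : Set A, SimpleDefComplete att S ∧
      ∀ T, SimpleDefComplete att T → T ⊆ S → T = S) := by
  obtain ⟨S₀, hS₀⟩ := exists_simpleDefComplete att
  have hfin : {S : Set A | SimpleDefComplete att S}.Finite := Set.toFinite _
  have hne : {S : Set A | SimpleDefComplete att S}.Nonempty := ⟨S₀, hS₀⟩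
  refine ⟨⟨S₀, hS₀⟩, ?_, ?_⟩
  · obtain ⟨S, hS, hmax⟩ := Set.Finite.exists_maximalFor id _ hfin hne
    exact ⟨S, hS, fun T hT hST => Set.Subset.antisymm (hmax hT hST) hST⟩
  · obtain ⟨S, hS, hmin⟩ := Set.Finite.exists_minimalFor id _ hfin hne
    exact ⟨S, hS, fun T hT hTS => Set.Subset.antisymm hTS (hmin hT hTS)⟩

end EEAF
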